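/- Define u_t⁻(λ) = e^{−2t}λ + 2e^{−t}(1 − e^{−t})(√(1 + λ) − 1) for t ≥ 0, λ ≥ 0, and define φ₋(z) = 2z − 2(√(1 + z) − 1) for z ≥ 0. Then for every λ ≥ 0: u_0⁻(λ) = λ, u_t⁻(λ) ≥ 0 for all t ≥ 0, and t ↦ u_t⁻(λ) is differentiable on [0,∞) with (d/dt) u_t⁻(λ) = −φ₋(u_t⁻(λ)) for all t ≥ 0. (In particular √(1 + u_t⁻(λ)) = 1 + e^{−t}(√(1 + λ) − 1).) -/

import Mathlib

/-- `u_t⁻(λ) = e^{-2t}λ + 2e^{-t}(1-e^{-t})(√(1+λ) - 1)`. -/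
noncomputable def uMinus (t lam : ℝ) : ℝ :=
  Real.exp (-2 * t) * lam + 2 * Real.exp (-t) * (1 - Real.exp (-t)) * (Real.sqrt (1 + lam) - 1)

/-- `φ₋(z) = 2z - 2(√(1+z) - 1)`. -/
noncomputable def phiMinus (z : ℝ) : ℝ := 2 * z - 2 * (Real.sqrt (1 + z) - 1)

theorem stmt18 :
    ∀ lam : ℝ, 0 ≤ lam →
      uMinus 0 lam = lam ∧
      (∀ t : ℝ, 0 ≤ t → 0 ≤ uMinus t lam) ∧
      (∀ t : ℝ, 0 ≤ t →
        HasDerivAt (fun s => uMinus s lam) (-phiMinus (uMinus t lam)) t) ∧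
      (∀ t : ℝ, 0 ≤ t →
        Real.sqrt (1 + uMinus t lam) = 1 + Real.exp (-t) * (Real.sqrt (1 + lam) - 1)) := by
  intro lam hlam
  set s := Real.sqrt (1 + lam) with hs
  have hs2 : s ^ 2 = 1 + lam := Real.sq_sqrt (by linarith)
  have hs1 : 1 ≤ s := by
    nlinarith [Real.sqrt_nonneg (1 + lam), hs2]
  have key : ∀ t : ℝ, uMinus t lam = (1 + Real.exp (-t) * (s - 1)) ^ 2 - 1 := by
    intro t
    have he : Real.exp (-2 * t) = Real.exp (-t) * Real.exp (-t) := by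
      rw [← Real.exp_add]; ring_nf
    rw [uMinus, he, ← hs]
    linear_combination (-(Real.exp (-t) * Real.exp (-t))) * hs2
  have hanonneg : ∀ t : ℝ, 0 ≤ t → 0 ≤ Real.exp (-t) * (s - 1) := fun t ht =>
    mul_nonneg (Real.exp_nonneg _) (by linarith)
  have hsqrt : ∀ t : ℝ, 0 ≤ t →
      Real.sqrt (1 + uMinus t lam) = 1 + Real.exp (-t) * (s - 1) := by
    intro t ht
    rw [key t, show 1 + ((1 + Real.exp (-t) * (s - 1)) ^ 2 - 1)
      = (1 + Real.exp (-t) * (s - 1)) ^ 2 by ring]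
    exact Real.sqrt_sq (by linarith [hanonneg t ht])
  refine ⟨?_, ?_, ?_, hsqrt⟩
  · rw [key 0]; simp; linarith [hs2]
  · intro t ht
    have := hanonneg t ht
    rw [key t]; nlinarith
  · intro t ht
    have ha : HasDerivAt (fun t : ℝ => Real.exp (-t)) (-Real.exp (-t)) t := by
      simpa [Function.comp_def] using (Real.hasDerivAt_exp (-t)).comp t (hasDerivAt_neg t)
    have h1 : HasDerivAt (fun t : ℝ => 1 + Real.exp (-t) * (s - 1))
        (-Real.exp (-t) * (s - 1)) t := (ha.mul_const (s - 1)).const_add 1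
    have h2 : HasDerivAt (fun t : ℝ => (1 + Real.exp (-t) * (s - 1)) ^ 2 - 1)
        ((2 : ℕ) * (1 + Real.exp (-t) * (s - 1)) ^ 1 * (-Real.exp (-t) * (s - 1))) t :=
      (h1.pow 2).sub_const 1
    have hfun : (fun s' => uMinus s' lam) = fun t : ℝ => (1 + Real.exp (-t) * (s - 1)) ^ 2 - 1 :=
      funext key
    rw [hfun]
    convert h2 using 1
    rw [phiMinus, hsqrt t ht, key t]
    ring
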